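/- The code RM_q(s−1,d) has covering radius ρ = 2 and minimum distance δ = 4 if q = 2 and δ = 3 if q ≥ 3. Furthermore its neighbour set coincides with that of RM_q(s,d): RM_q(s−1,d)_1 = RM_q(s,d)_1. -/
import Mathlib


variable {M Q : Type*}

/-- The set of entries in which two vertices of the Hamming graph differ. -/
def diffSet [Fintype M] [DecidableEq Q] (α β : M → Q) : Finset M :=
  Finset.univ.filter fun i => α i ≠ β i

/-- `GammaSet α r` is the set of vertices at Hamming distance exactly `r` from `α`. -/
def GammaSet [Fintype M] [DecidableEq Q] (α : M → Q) (r : ℕ) : Set (M → Q) :=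
  {β | hammingDist α β = r}

/-- The neighbour set `C₁` of a code `C`. -/
def neighbourSet [Fintype M] [DecidableEq Q] (C : Set (M → Q)) : Set (M → Q) :=
  {ν | ν ∉ C ∧ ∃ c ∈ C, hammingDist ν c = 1}

/-- An automorphism of the Hamming graph: a bijection of vertices preserving Hamming distance. -/
def IsAut [Fintype M] [DecidableEq Q] (x : (M → Q) ≃ (M → Q)) : Prop :=
  ∀ a b, hammingDist (x a) (x b) = hammingDist a b

/-- An elusive triple `(C, α, x)`. -/
def IsElusiveTriple [Fintype M] [DecidableEq Q] (C : Set (M → Q)) (α : M → Q)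
    (x : (M → Q) ≃ (M → Q)) : Prop :=
  IsAut x ∧ x '' neighbourSet C = neighbourSet C ∧ α ∈ C ∧ x α ∉ C

/-- A `(C,α,x)`-associate: a vertex in `Γ₂(α) ∩ C^x`. -/
def IsAssociate [Fintype M] [DecidableEq Q] (C : Set (M → Q)) (α : M → Q)
    (x : (M → Q) ≃ (M → Q)) (π : M → Q) : Prop :=
  π ∈ GammaSet α 2 ∧ π ∈ x '' C

/-- `MC C π π' = |C ∩ Γ₂(π) ∩ Γ₂(π')|`, the number of mutual codewords. -/
noncomputable def MC [Fintype M] [DecidableEq Q] (C : Set (M → Q)) (π π' : M → Q) : ℕ :=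
  (C ∩ GammaSet π 2 ∩ GammaSet π' 2).ncard

/-- The code `C` has minimum distance `δ`. -/
def HasMinDist [Fintype M] [DecidableEq Q] (C : Set (M → Q)) (δ : ℕ) : Prop :=
  IsLeast {d : ℕ | ∃ a ∈ C, ∃ b ∈ C, a ≠ b ∧ hammingDist a b = d} δ

/-- `IsCodeDist C β k` says that `d(β, C) = k`. -/
def IsCodeDist [Fintype M] [DecidableEq Q] (C : Set (M → Q)) (β : M → Q) (k : ℕ) : Prop :=
  IsLeast {d : ℕ | ∃ γ ∈ C, hammingDist β γ = d} k

/-- `update2 α i j a b` is the vertex `γ(α|i,j|a,b)`. -/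
def update2 [DecidableEq M] (α : M → Q) (i j : M) (a b : Q) : M → Q :=
  Function.update (Function.update α i a) j b

/-- `update3 α i j k a b c` is the vertex `γ(α|i,j,k|a,b,c)`. -/
def update3 [DecidableEq M] (α : M → Q) (i j k : M) (a b c : Q) : M → Q :=
  Function.update (Function.update (Function.update α i a) j b) k c

/-- The Reed–Muller code `RM_q(s,d)` (with `s = (q-1)d - 1`): the dual of the repetition
code, i.e. all vertices of `H(q^d, q)` whose entries sum to zero. -/
def RMs (F : Type*) [Field F] [Fintype F] (d : ℕ) : Set ((Fin d → F) → F) :=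
  {α | ∑ v : Fin d → F, α v = 0}

/-- The Reed–Muller code `RM_q(s-1,d)` (with `s = (q-1)d - 1`): the members `α` of
`RM_q(s,d)` which additionally satisfy `∑_{v ∈ M} α_v • v = 0`. -/
def RMs1 (F : Type*) [Field F] [Fintype F] (d : ℕ) : Set ((Fin d → F) → F) :=
  {α | ∑ v : Fin d → F, α v = 0 ∧ ∑ v : Fin d → F, α v • v = 0}

-- ===================== auxiliary lemmas =====================
set_option linter.unusedSectionVars false
section Aux
variable [Fintype M] [DecidableEq M] [DecidableEq Q]

omit [DecidableEq M] in
lemma hammingDist_eq_card_diffSet (a b : M → Q) :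
    hammingDist a b = (diffSet a b).card := rfl

omit [DecidableEq M] in
lemma mem_diffSet {a b : M → Q} {v : M} : v ∈ diffSet a b ↔ a v ≠ b v := by
  simp [diffSet]

lemma sum_update_apply {N : Type*} [AddCommGroup N] (φ : M → Q → N) (β : M → Q) (u : M) (a : Q) :
    ∑ v, φ v (Function.update β u a v) = (∑ v, φ v (β v)) + (φ u a - φ u (β u)) := by
  have h1 : ∀ v ∈ Finset.univ \ {u}, φ v (Function.update β u a v) = φ v (β v) := by
    intro v hv
    rw [Function.update_of_ne (by simpa using (Finset.mem_sdiff.mp hv).2)]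
  rw [Finset.sum_eq_sum_sdiff_singleton_add (Finset.mem_univ u)
      (fun v => φ v (Function.update β u a v)),
    Finset.sum_eq_sum_sdiff_singleton_add (Finset.mem_univ u) (fun v => φ v (β v)),
    Finset.sum_congr rfl h1, Function.update_self]
  abel

omit [DecidableEq M] in
lemma sum_sub_eq_sum_diffSet {N : Type*} [AddCommGroup N] (φ : M → Q → N) (a b : M → Q) :
    (∑ v, φ v (a v)) - (∑ v, φ v (b v)) = ∑ v ∈ diffSet a b, (φ v (a v) - φ v (b v)) := by
  rw [← Finset.sum_sub_distrib]
  refine (Finset.sum_subset (Finset.subset_univ _) fun v _ hv => ?_).symm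
  rw [mem_diffSet, not_not] at hv
  rw [hv, sub_self]

lemma diffSet_update {β : M → Q} {u : M} {a : Q} (h : a ≠ β u) :
    diffSet β (Function.update β u a) = {u} := by
  ext v
  rcases eq_or_ne v u with rfl | hv
  · simp [mem_diffSet, Ne.symm h]
  · simp [mem_diffSet, Function.update_of_ne hv, hv]

lemma hammingDist_update {β : M → Q} {u : M} {a : Q} (h : a ≠ β u) :
    hammingDist β (Function.update β u a) = 1 := by
  rw [hammingDist_eq_card_diffSet, diffSet_update h, Finset.card_singleton]

end Aux

section FieldAux
variable {F : Type} [Field F] [Fintype F] [DecidableEq F] {d : ℕ}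

lemma F2_cases (h : Fintype.card F = 2) (x : F) : x = 0 ∨ x = 1 := by
  have h01 : ({0, 1} : Finset F).card = 2 := by
    rw [Finset.card_insert_of_notMem (by simp), Finset.card_singleton]
  have huniv : ({0, 1} : Finset F) = Finset.univ :=
    Finset.eq_univ_of_card _ (by rw [h01, h])
  have hx : x ∈ ({0, 1} : Finset F) := huniv ▸ Finset.mem_univ x
  simpa using hx

lemma F2_one (h : Fintype.card F = 2) {x : F} (hx : x ≠ 0) : x = 1 :=
  (F2_cases h x).resolve_left hx

lemma F2_add (h : Fintype.card F = 2) : (1 : F) + 1 = 0 := by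
  rcases F2_cases h (1 + 1) with h1 | h1
  · exact h1
  · exact absurd (by linear_combination h1 : (1:F) = 0) one_ne_zero

lemma mem_RMs1_iff {α : (Fin d → F) → F} :
    α ∈ RMs1 F d ↔ (∑ v, α v = 0 ∧ ∑ v, α v • v = 0) := Iff.rfl

lemma mem_RMs_iff {α : (Fin d → F) → F} :
    α ∈ RMs F d ↔ ∑ v, α v = 0 := Iff.rfl

lemma sum_update_plain (β : (Fin d → F) → F) (u : Fin d → F) (a : F) :
    ∑ v, Function.update β u a v = (∑ v, β v) + (a - β u) :=
  sum_update_apply (fun _ q => q) β u a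

lemma sum_update_smul (β : (Fin d → F) → F) (u : Fin d → F) (a : F) :
    ∑ v, Function.update β u a v • v = (∑ v, β v • v) + (a • u - β u • u) :=
  sum_update_apply (fun v q => q • v) β u a

/-- If `β` is at Hamming distance 1 from something with entry-sum 0, then `∑ β ≠ 0`. -/
lemma sum_ne_zero_of_dist_one {β c : (Fin d → F) → F} (hc : ∑ v, c v = 0)
    (h1 : hammingDist β c = 1) : ∑ v, β v ≠ 0 := by
  rw [hammingDist_eq_card_diffSet] at h1
  obtain ⟨u, hu⟩ := Finset.card_eq_one.mp h1
  have hsum := sum_sub_eq_sum_diffSet (fun _ (q : F) => q) β c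
  rw [hu, Finset.sum_singleton, hc, sub_zero] at hsum
  have hne : β u ≠ c u := mem_diffSet.mp (hu ▸ Finset.mem_singleton_self u)
  rw [hsum]
  exact sub_ne_zero.mpr hne

/-- One-entry repair into `RMs1` when the entry sum is nonzero. -/
lemma repair_one {β : (Fin d → F) → F} (hs : ∑ v, β v ≠ 0) :
    ∃ c ∈ RMs1 F d, hammingDist β c = 1 := by
  set s := ∑ v, β v with hsdef
  set t := ∑ v, β v • v with htdef
  set u : Fin d → F := s⁻¹ • t with hu
  refine ⟨Function.update β u (β u - s), ⟨?_, ?_⟩, ?_⟩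
  · rw [sum_update_plain, ← hsdef]; ring
  · have hsu : s • u = t := by rw [hu, smul_smul, mul_inv_cancel₀ hs, one_smul]
    rw [sum_update_smul, ← htdef, sub_smul, hsu]
    abel
  · exact hammingDist_update (fun h => hs (by simpa using sub_eq_self.mp h))

/-- One-entry repair into `RMs` when the entry sum is nonzero. -/
lemma repair_one' {β : (Fin d → F) → F} (hs : ∑ v, β v ≠ 0) :
    ∃ c ∈ RMs F d, hammingDist β c = 1 := by
  refine ⟨Function.update β 0 (β 0 - ∑ v, β v), ?_, ?_⟩
  · rw [mem_RMs_iff, sum_update_plain]; ring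
  · exact hammingDist_update (fun h => hs (by simpa using sub_eq_self.mp h))

lemma nbr_RMs1 (ν : (Fin d → F) → F) :
    ν ∈ neighbourSet (RMs1 F d) ↔ ∑ v, ν v ≠ 0 := by
  constructor
  · rintro ⟨-, c, hc, h1⟩
    exact sum_ne_zero_of_dist_one hc.1 h1
  · intro hs
    obtain ⟨c, hc, h1⟩ := repair_one hs
    exact ⟨fun h => hs h.1, c, hc, h1⟩

lemma nbr_RMs (ν : (Fin d → F) → F) :
    ν ∈ neighbourSet (RMs F d) ↔ ∑ v, ν v ≠ 0 := by
  constructor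
  · rintro ⟨-, c, hc, h1⟩
    exact sum_ne_zero_of_dist_one hc h1
  · intro hs
    obtain ⟨c, hc, h1⟩ := repair_one' hs
    exact ⟨hs, c, hc, h1⟩

/-- Every vertex is within distance 2 of `RMs1`. -/
lemma exists_close (β : (Fin d → F) → F) :
    ∃ c ∈ RMs1 F d, hammingDist β c ≤ 2 := by
  by_cases hs : ∑ v, β v = 0
  · by_cases ht : ∑ v, β v • v = 0
    · exact ⟨β, ⟨hs, ht⟩, by simp⟩
    · set t := ∑ v, β v • v with htdef
      set u : Fin d → F := -t with hu
      set γ := Function.update β u (β u + 1) with hγ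
      set c := Function.update γ 0 (γ 0 - 1) with hc
      refine ⟨c, ⟨?_, ?_⟩, ?_⟩
      · rw [hc, sum_update_plain, hγ, sum_update_plain, hs]; ring
      · rw [hc, sum_update_smul, hγ, sum_update_smul, ← htdef, smul_zero, smul_zero, add_smul,
          one_smul, hu]
        abel
      · have hsub : diffSet β c ⊆ {u, 0} := by
          intro v hv
          by_contra hmem
          simp only [Finset.mem_insert, Finset.mem_singleton, not_or] at hmem
          exact mem_diffSet.mp hv
            (by rw [hc, Function.update_of_ne hmem.2, hγ, Function.update_of_ne hmem.1])
        calc hammingDist β c = (diffSet β c).card := hammingDist_eq_card_diffSet β c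
          _ ≤ ({u, 0} : Finset (Fin d → F)).card := Finset.card_le_card hsub
          _ ≤ 2 := (Finset.card_insert_le _ _).trans (by simp)
  · obtain ⟨c, hc, h1⟩ := repair_one hs
    exact ⟨c, hc, by omega⟩
end FieldAux

section Part2
variable {F : Type} [Field F] [Fintype F] [DecidableEq F] {d : ℕ}

/-- A vertex at distance exactly 2 from `RMs1`. -/
lemma cov_beta (hd : 1 ≤ d) : ∃ β : (Fin d → F) → F, IsCodeDist (RMs1 F d) β 2 := by
  set p : Fin d → F := fun _ => 1 with hpdef
  have hp : p ≠ 0 := fun h => one_ne_zero (congrFun h ⟨0, hd⟩)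
  set β : (Fin d → F) → F :=
    Function.update (Function.update (0 : (Fin d → F) → F) p 1) 0 (-1) with hβ
  have hS : ∑ v, β v = 0 := by
    rw [hβ, sum_update_plain, sum_update_plain,
      Function.update_of_ne (Ne.symm hp)]
    simp
  have hT : ∑ v, β v • v = p := by
    rw [hβ, sum_update_smul, sum_update_smul]
    simp
  refine ⟨β, ⟨⟨0, ⟨by simp, by simp⟩, ?_⟩, ?_⟩⟩
  · -- hammingDist β 0 = 2
    have hD : diffSet β (0 : (Fin d → F) → F) = {(0 : Fin d → F), p} := by
      ext w
      rcases eq_or_ne w 0 with rfl | h0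
      · simp [mem_diffSet, hβ]
      · rcases eq_or_ne w p with rfl | h2
        · simp [mem_diffSet, hβ, Function.update_of_ne h0, h0]
        · simp [mem_diffSet, hβ, Function.update_of_ne h0, Function.update_of_ne h2, h0, h2]
    rw [hammingDist_eq_card_diffSet, hD,
      Finset.card_insert_of_notMem (by simpa using Ne.symm hp), Finset.card_singleton]
  · rintro m ⟨γ, hγ, hm⟩
    by_contra hlt
    push_neg at hlt
    interval_cases m
    · exact hp (by rw [← hT, hammingDist_eq_zero.mp hm, hγ.2])
    · exact sum_ne_zero_of_dist_one hγ.1 hm hS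

lemma dist_ge_three {a b : (Fin d → F) → F} (ha : a ∈ RMs1 F d) (hb : b ∈ RMs1 F d)
    (hab : a ≠ b) : 3 ≤ hammingDist a b := by
  have hplain : ∑ v ∈ diffSet a b, (a v - b v) = 0 := by
    have h := sum_sub_eq_sum_diffSet (fun _ (q : F) => q) a b
    rw [ha.1, hb.1, sub_zero] at h
    exact h.symm
  have hsmul : ∑ v ∈ diffSet a b, (a v - b v) • v = 0 := by
    have h := sum_sub_eq_sum_diffSet (fun (v : Fin d → F) (q : F) => q • v) a b
    rw [ha.2, hb.2, sub_zero] at h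
    calc ∑ v ∈ diffSet a b, (a v - b v) • v
        = ∑ v ∈ diffSet a b, (a v • v - b v • v) :=
          Finset.sum_congr rfl fun v _ => sub_smul _ _ _
      _ = 0 := h.symm
  have h0 : (diffSet a b).card ≠ 0 := by
    intro h
    exact hab (funext fun v => by
      by_contra hv
      simpa [Finset.card_eq_zero.mp h] using mem_diffSet.mpr hv)
  have h1 : (diffSet a b).card ≠ 1 := by
    intro h
    obtain ⟨u, hu⟩ := Finset.card_eq_one.mp h
    rw [hu, Finset.sum_singleton] at hplain
    exact mem_diffSet.mp (hu ▸ Finset.mem_singleton_self u) (sub_eq_zero.mp hplain)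
  have h2 : (diffSet a b).card ≠ 2 := by
    intro h
    obtain ⟨u, w, huw, hD⟩ := Finset.card_eq_two.mp h
    rw [hD, Finset.sum_pair huw] at hplain hsmul
    have hu : a u ≠ b u := mem_diffSet.mp (hD ▸ by simp)
    have hδ : a w - b w = -(a u - b u) := by linear_combination hplain
    rw [hδ] at hsmul
    have hz : (a u - b u) • (u - w) = 0 := by
      rw [smul_sub, sub_eq_add_neg, ← neg_smul]
      exact hsmul
    rcases smul_eq_zero.mp hz with h' | h'
    · exact sub_ne_zero.mpr hu h'
    · exact huw (sub_eq_zero.mp h')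
  rw [hammingDist_eq_card_diffSet]
  omega

lemma dist_ge_four (hq : Fintype.card F = 2) {a b : (Fin d → F) → F} (ha : a ∈ RMs1 F d)
    (hb : b ∈ RMs1 F d) (hab : a ≠ b) : 4 ≤ hammingDist a b := by
  have h3 := dist_ge_three ha hb hab
  rcases Nat.lt_or_ge (hammingDist a b) 4 with hlt | h
  · exfalso
    have hcard : (diffSet a b).card = 3 := by
      rw [hammingDist_eq_card_diffSet] at h3 hlt; omega
    have hplain : ∑ v ∈ diffSet a b, (a v - b v) = 0 := by
      have h := sum_sub_eq_sum_diffSet (fun _ (q : F) => q) a b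
      rw [ha.1, hb.1, sub_zero] at h
      exact h.symm
    obtain ⟨u, v, w, huv, huw, hvw, hD⟩ := Finset.card_eq_three.mp hcard
    rw [hD, Finset.sum_insert (by simp [huv, huw]), Finset.sum_pair hvw] at hplain
    have e1 : a u - b u = 1 :=
      F2_one hq (sub_ne_zero.mpr (mem_diffSet.mp (hD ▸ by simp)))
    have e2 : a v - b v = 1 :=
      F2_one hq (sub_ne_zero.mpr (mem_diffSet.mp (hD ▸ by simp)))
    have e3 : a w - b w = 1 :=
      F2_one hq (sub_ne_zero.mpr (mem_diffSet.mp (hD ▸ by simp)))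
    rw [e1, e2, e3] at hplain
    exact one_ne_zero (by linear_combination hplain - F2_add hq)
  · exact h

end Part2

section Part3
variable {F : Type} [Field F] [Fintype F] [DecidableEq F] {d : ℕ}

lemma hasMinDist3 (hd : 1 ≤ d) (hq3 : 3 ≤ Fintype.card F) : HasMinDist (RMs1 F d) 3 := by
  constructor
  · -- 3 is attained
    have hy : ∃ y : F, y ≠ 0 ∧ y ≠ -1 := by
      by_contra h
      push_neg at h
      have hsub : (Finset.univ : Finset F) ⊆ {0, -1} := by
        intro y _
        rcases eq_or_ne y 0 with rfl | hy
        · simp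
        · simp [h y hy]
      have hc := Finset.card_le_card hsub
      rw [Finset.card_univ] at hc
      have : ({0, -1} : Finset F).card ≤ 2 :=
        (Finset.card_insert_le _ _).trans (by simp)
      omega
    obtain ⟨y, hy0, hy1⟩ := hy
    set u : Fin d → F := fun _ => 1 with hudef
    have hu : u ≠ 0 := fun h => one_ne_zero (congrFun h ⟨0, hd⟩)
    have hw0 : (-y⁻¹ • u : Fin d → F) ≠ 0 :=
      smul_ne_zero (neg_ne_zero.mpr (inv_ne_zero hy0)) hu
    have hwu : (-y⁻¹ • u : Fin d → F) ≠ u := by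
      have hne : (-y⁻¹ : F) ≠ 1 := by
        intro h
        apply hy1
        have h' : y⁻¹ = -1 := by linear_combination -h
        calc y = (y⁻¹)⁻¹ := (inv_inv y).symm
          _ = (-1 : F)⁻¹ := by rw [h']
          _ = -1 := by norm_num
      intro h
      have hz : (-y⁻¹ - 1) • u = 0 := by rw [sub_smul, one_smul, h, sub_self]
      rcases smul_eq_zero.mp hz with h' | h'
      · exact hne (by linear_combination h')
      · exact hu h'
    set w : Fin d → F := -y⁻¹ • u with hwdef
    set b : (Fin d → F) → F :=
      Function.update (Function.update (Function.update (0 : (Fin d → F) → F)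
        (0 : Fin d → F) (-(1 + y))) u 1) w y with hb
    have hS : ∑ v, b v = 0 := by
      rw [hb, sum_update_plain, sum_update_plain, sum_update_plain,
        Function.update_of_ne hwu, Function.update_of_ne hw0, Function.update_of_ne hu]
      simp
    have hT : ∑ v, b v • v = 0 := by
      rw [hb, sum_update_smul, sum_update_smul, sum_update_smul,
        Function.update_of_ne hwu, Function.update_of_ne hw0, Function.update_of_ne hu]
      simp [hwdef, smul_smul]
      rw [mul_inv_cancel₀ hy0, one_smul]
      simp
    refine ⟨0, ⟨by simp, by simp⟩, b, ⟨hS, hT⟩, ?_, ?_⟩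
    · intro h
      exact hy0 (by simpa [hb] using (congrFun h w).symm)
    · have hD : diffSet (0 : (Fin d → F) → F) b = {(0 : Fin d → F), u, w} := by
        ext x
        rcases eq_or_ne x w with rfl | hxw
        · simp [mem_diffSet, hb, Ne.symm hy0]
        · rcases eq_or_ne x u with rfl | hxu
          · simp [mem_diffSet, hb, Function.update_of_ne (Ne.symm hwu), hxw]
          · rcases eq_or_ne x 0 with rfl | hx0
            · have h1y : (1 : F) + y ≠ 0 := fun h => hy1 (by linear_combination h)
              refine iff_of_true (mem_diffSet.mpr ?_) (by simp)
              rw [hb, Function.update_of_ne hxw, Function.update_of_ne hxu,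
                Function.update_self]
              simp only [Pi.zero_apply]
              exact fun h => h1y (by linear_combination h)
            · simp [mem_diffSet, hb, Function.update_of_ne hxw,
                Function.update_of_ne hxu, Function.update_of_ne hx0, hxw, hxu, hx0]
      rw [hammingDist_eq_card_diffSet, hD,
        Finset.card_insert_of_notMem (by simp [Ne.symm hu, Ne.symm hw0]),
        Finset.card_insert_of_notMem (by simpa using Ne.symm hwu), Finset.card_singleton]
  · rintro m ⟨a, ha, b, hb, hab, rfl⟩
    exact dist_ge_three ha hb hab

lemma hasMinDist4 (hd2 : 2 ≤ d) (hq : Fintype.card F = 2) : HasMinDist (RMs1 F d) 4 := by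
  have h2 : (1 : F) + 1 = 0 := F2_add hq
  set i0 : Fin d := ⟨0, by omega⟩ with hi0
  set i1 : Fin d := ⟨1, by omega⟩ with hi1
  have hi : i0 ≠ i1 := fun h => by simpa [hi0, hi1] using congrArg Fin.val h
  set p1 : Fin d → F := Pi.single i0 1 with hp1
  set p2 : Fin d → F := Pi.single i1 1 with hp2
  set p3 : Fin d → F := p1 + p2 with hp3
  have e10 : p1 i0 = 1 := by simp [hp1]
  have e11 : p1 i1 = 0 := by simp [hp1, Pi.single_eq_of_ne (Ne.symm hi)]
  have e20 : p2 i0 = 0 := by simp [hp2, Pi.single_eq_of_ne hi]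
  have e21 : p2 i1 = 1 := by simp [hp2]
  have e30 : p3 i0 = 1 := by rw [hp3, Pi.add_apply, e10, e20, add_zero]
  have e31 : p3 i1 = 1 := by rw [hp3, Pi.add_apply, e11, e21, zero_add]
  have h01 : (0 : Fin d → F) ≠ p1 := by
    intro h; have hc := congrFun h i0; rw [Pi.zero_apply, e10] at hc; exact zero_ne_one hc
  have h02 : (0 : Fin d → F) ≠ p2 := by
    intro h; have hc := congrFun h i1; rw [Pi.zero_apply, e21] at hc; exact zero_ne_one hc
  have h03 : (0 : Fin d → F) ≠ p3 := by
    intro h; have hc := congrFun h i0; rw [Pi.zero_apply, e30] at hc; exact zero_ne_one hc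
  have h12 : p1 ≠ p2 := by
    intro h; have hc := congrFun h i0; rw [e10, e20] at hc; exact one_ne_zero hc
  have h13 : p1 ≠ p3 := by
    intro h; have hc := congrFun h i1; rw [e11, e31] at hc; exact zero_ne_one hc
  have h23 : p2 ≠ p3 := by
    intro h; have hc := congrFun h i0; rw [e20, e30] at hc; exact zero_ne_one hc
  set b : (Fin d → F) → F :=
    Function.update (Function.update (Function.update (Function.update
      (0 : (Fin d → F) → F) (0 : Fin d → F) 1) p1 1) p2 1) p3 1 with hb
  have hS : ∑ v, b v = 0 := by
    rw [hb, sum_update_plain, sum_update_plain, sum_update_plain, sum_update_plain,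
      Function.update_of_ne (Ne.symm h23), Function.update_of_ne (Ne.symm h13),
      Function.update_of_ne (Ne.symm h03), Function.update_of_ne (Ne.symm h12),
      Function.update_of_ne (Ne.symm h02), Function.update_of_ne (Ne.symm h01)]
    simp
    linear_combination 2 * h2
  have hT : ∑ v, b v • v = 0 := by
    rw [hb, sum_update_smul, sum_update_smul, sum_update_smul, sum_update_smul,
      Function.update_of_ne (Ne.symm h23), Function.update_of_ne (Ne.symm h13),
      Function.update_of_ne (Ne.symm h03), Function.update_of_ne (Ne.symm h12),
      Function.update_of_ne (Ne.symm h02), Function.update_of_ne (Ne.symm h01)]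
    simp [hp3]
    ext j
    simp [Pi.add_apply]
    linear_combination (p1 j + p2 j) * h2
  constructor
  · refine ⟨0, ⟨by simp, by simp⟩, b, ⟨hS, hT⟩, ?_, ?_⟩
    · intro h
      have hc := congrFun h p3
      rw [hb, Function.update_self, Pi.zero_apply] at hc
      exact zero_ne_one hc
    · have hD : diffSet (0 : (Fin d → F) → F) b = {(0 : Fin d → F), p1, p2, p3} := by
        ext x
        rcases eq_or_ne x p3 with rfl | hx3
        · simp [mem_diffSet, hb]
        · rcases eq_or_ne x p2 with rfl | hx2
          · simp [mem_diffSet, hb, Function.update_of_ne (Ne.symm h23), hx3]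
          · rcases eq_or_ne x p1 with rfl | hx1
            · simp [mem_diffSet, hb, Function.update_of_ne (Ne.symm h13),
                Function.update_of_ne (Ne.symm h12), hx3, hx2]
            · rcases eq_or_ne x 0 with rfl | hx0
              · simp [mem_diffSet, hb, Function.update_of_ne (Ne.symm h03),
                  Function.update_of_ne (Ne.symm h02), Function.update_of_ne (Ne.symm h01),
                  hx3, hx2, hx1]
              · simp [mem_diffSet, hb, Function.update_of_ne hx3, Function.update_of_ne hx2,
                  Function.update_of_ne hx1, Function.update_of_ne hx0, hx3, hx2, hx1, hx0]
      rw [hammingDist_eq_card_diffSet, hD,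
        Finset.card_insert_of_notMem (by simp [h01, h02, h03]),
        Finset.card_insert_of_notMem (by simp [h12, h13]),
        Finset.card_insert_of_notMem (by simpa using h23), Finset.card_singleton]
  · rintro m ⟨a, ha, b', hb', hab, rfl⟩
    exact dist_ge_four hq ha hb' hab

end Part3

/-- `RM_q(s-1,d)` has covering radius 2, minimum distance 4 if `q = 2`
and 3 if `q ≥ 3`, and its neighbour set coincides with that of `RM_q(s,d)`. -/
theorem stmt_16 (F : Type) [Field F] [Fintype F] [DecidableEq F] (d : ℕ) (hd : 1 ≤ d)
    (hdq : (d, Fintype.card F) ≠ (1, 2)) :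
    IsGreatest {k : ℕ | ∃ β : (Fin d → F) → F, IsCodeDist (RMs1 F d) β k} 2 ∧
    (Fintype.card F = 2 → HasMinDist (RMs1 F d) 4) ∧
    (3 ≤ Fintype.card F → HasMinDist (RMs1 F d) 3) ∧
    neighbourSet (RMs1 F d) = neighbourSet (RMs F d) := by
  refine ⟨⟨cov_beta hd, ?_⟩, ?_, fun hq3 => hasMinDist3 hd hq3, ?_⟩
  · rintro k ⟨β, hk⟩
    obtain ⟨c, hc, hle⟩ := exists_close β
    exact le_trans (hk.2 ⟨c, hc, rfl⟩) hle
  · intro hq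
    have hd1 : d ≠ 1 := fun h => hdq (by rw [h, hq])
    exact hasMinDist4 (by omega) hq
  · ext ν
    exact (nbr_RMs1 ν).trans (nbr_RMs ν).symm
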